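/- Let A = (a_{jk}) be a real symmetric positive definite 3×3 matrix with a := (a₁₃, a₂₃) and a₀(ξ) := ∑_{j,k=1}^{2} a_{jk} ξ_j ξ_k, let P = (p_{jk}) be a real symmetric positive definite 2×2 matrix with p₀(ξ) := ∑_{j,k=1}^{2} p_{jk} ξ_j ξ_k, and let b > 0. For ξ ∈ ℝ² and τ > 0 define λ̃(ξ, τ) := i⟨a, ξ⟩/a₃₃ + (1/a₃₃)·√(a₃₃·(τ² + a₀(ξ)) − ⟨a, ξ⟩²) and g̃(ξ, τ) := b·λ̃(ξ, τ)·(τ² + p₀(ξ))/(τ² + a₀(ξ)). Then there exist constants a*, b*, c*, d* > 0 such that for all ξ ∈ ℝ² and τ > 0: Re λ̃(ξ, τ) ≥ a*·√(|ξ|² + τ²), τ² + a₀(ξ) ≤ b*·(|ξ|² + τ²), τ² + p₀(ξ) ≥ c*·(|ξ|² + τ²), and Re g̃(ξ, τ) ≥ d*·√(|ξ|² + τ²). -/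

import Mathlib

/-- The tangential quadratic form `a₀(ξ) = ∑_{j,k=1}^{2} a_{jk} ξ_j ξ_k`. -/
def quadForm2of3 (A : Matrix (Fin 3) (Fin 3) ℝ) (ξ : Fin 2 → ℝ) : ℝ :=
  ∑ j : Fin 2, ∑ k : Fin 2, A j.castSucc k.castSucc * ξ j * ξ k

/-- The quadratic form `p₀(ξ) = ∑_{j,k=1}^{2} p_{jk} ξ_j ξ_k`. -/
def quadForm2 (P : Matrix (Fin 2) (Fin 2) ℝ) (ξ : Fin 2 → ℝ) : ℝ :=
  ∑ j : Fin 2, ∑ k : Fin 2, P j k * ξ j * ξ k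

/-- The vector pairing `⟨a, ξ⟩` with `a = (a₁₃, a₂₃)`. -/
def pairA (A : Matrix (Fin 3) (Fin 3) ℝ) (ξ : Fin 2 → ℝ) : ℝ :=
  A 0 2 * ξ 0 + A 1 2 * ξ 1

/-- `λ̃(ξ,τ) = i⟨a,ξ⟩/a₃₃ + (1/a₃₃)√(a₃₃(τ² + a₀(ξ)) - ⟨a,ξ⟩²)`. -/
noncomputable def lamTilde (A : Matrix (Fin 3) (Fin 3) ℝ) (ξ : Fin 2 → ℝ) (τ : ℝ) : ℂ :=
  Complex.I * ((pairA A ξ : ℝ) : ℂ) / ((A 2 2 : ℝ) : ℂ)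
    + (1 / ((A 2 2 : ℝ) : ℂ))
      * ((Real.sqrt (A 2 2 * (τ ^ 2 + quadForm2of3 A ξ) - pairA A ξ ^ 2) : ℝ) : ℂ)

/-- `g̃(ξ,τ) = b·λ̃(ξ,τ)·(τ² + p₀(ξ))/(τ² + a₀(ξ))`. -/
noncomputable def gTilde (A : Matrix (Fin 3) (Fin 3) ℝ) (P : Matrix (Fin 2) (Fin 2) ℝ)
    (b : ℝ) (ξ : Fin 2 → ℝ) (τ : ℝ) : ℂ :=
  ((b : ℝ) : ℂ) * lamTilde A ξ τ
    * (((τ ^ 2 + quadForm2 P ξ) / (τ ^ 2 + quadForm2of3 A ξ) : ℝ) : ℂ)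

/-- A two-variable quadratic form that is positive away from the origin is bounded
below by a positive multiple of the Euclidean norm squared. -/
lemma quad_lower (a c d : ℝ)
    (hpos : ∀ x y : ℝ, ¬(x = 0 ∧ y = 0) → 0 < a*x^2 + 2*c*x*y + d*y^2) :
    ∃ m : ℝ, 0 < m ∧ ∀ x y : ℝ, m*(x^2+y^2) ≤ a*x^2 + 2*c*x*y + d*y^2 := by
  have ha : 0 < a := by have := hpos 1 0 (by simp); nlinarith
  have hd : 0 < d := by have := hpos 0 1 (by simp); nlinarith
  have hdet : 0 < a*d - c^2 := by
    have := hpos c (-a) (by intro h; exact absurd h.2 (by simpa using ha.ne'))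
    nlinarith
  refine ⟨(a*d - c^2)/(a+d), by positivity, fun x y => ?_⟩
  rw [div_mul_eq_mul_div, div_le_iff₀ (by positivity)]
  nlinarith [sq_nonneg (a*x + c*y), sq_nonneg (c*x + d*y)]

set_option maxHeartbeats 1000000 in
/-- The key symbol estimates: there are `a*, b*, c*, d* > 0` with
`Re λ̃ ≥ a*√(|ξ|²+τ²)`, `τ² + a₀(ξ) ≤ b*(|ξ|²+τ²)`,
`τ² + p₀(ξ) ≥ c*(|ξ|²+τ²)` and `Re g̃ ≥ d*√(|ξ|²+τ²)`
for all `ξ ∈ ℝ²` and `τ > 0`. -/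
theorem stmt18 (A : Matrix (Fin 3) (Fin 3) ℝ) (P : Matrix (Fin 2) (Fin 2) ℝ) (b : ℝ)
    (hA : A.PosDef) (hP : P.PosDef) (hb : 0 < b) :
    ∃ as bs cs ds : ℝ, 0 < as ∧ 0 < bs ∧ 0 < cs ∧ 0 < ds ∧
      ∀ (ξ : Fin 2 → ℝ) (τ : ℝ), 0 < τ →
        (lamTilde A ξ τ).re ≥ as * Real.sqrt (ξ 0 ^ 2 + ξ 1 ^ 2 + τ ^ 2) ∧
        τ ^ 2 + quadForm2of3 A ξ ≤ bs * (ξ 0 ^ 2 + ξ 1 ^ 2 + τ ^ 2) ∧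
        τ ^ 2 + quadForm2 P ξ ≥ cs * (ξ 0 ^ 2 + ξ 1 ^ 2 + τ ^ 2) ∧
        (gTilde A P b ξ τ).re ≥ ds * Real.sqrt (ξ 0 ^ 2 + ξ 1 ^ 2 + τ ^ 2) := by
  -- abbreviate the matrix entries (to keep all later arithmetic on opaque atoms)
  obtain ⟨a00, a01, a02, a11, a12, a22, e00, e01, e02, e11, e12, e22⟩ :
      ∃ a00 a01 a02 a11 a12 a22 : ℝ, A 0 0 = a00 ∧ A 0 1 = a01 ∧ A 0 2 = a02 ∧
        A 1 1 = a11 ∧ A 1 2 = a12 ∧ A 2 2 = a22 :=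
    ⟨_, _, _, _, _, _, rfl, rfl, rfl, rfl, rfl, rfl⟩
  obtain ⟨p00, p01, p11, f00, f01, f11⟩ :
      ∃ p00 p01 p11 : ℝ, P 0 0 = p00 ∧ P 0 1 = p01 ∧ P 1 1 = p11 :=
    ⟨_, _, _, rfl, rfl, rfl⟩
  -- Symmetry facts
  have h10 : A 1 0 = a01 := e01 ▸ congrFun (congrFun hA.1 0) 1
  have h20 : A 2 0 = a02 := e02 ▸ congrFun (congrFun hA.1 0) 2
  have h21 : A 2 1 = a12 := e12 ▸ congrFun (congrFun hA.1 1) 2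
  have hp10 : P 1 0 = p01 := f01 ▸ congrFun (congrFun hP.1 0) 1
  -- Positivity of a₃₃
  have hα : 0 < a22 := by
    have h2 := hA.dotProduct_mulVec_pos (x := ![0,0,1]) (by intro h0; simpa using congrFun h0 2)
    simpa [dotProduct, Matrix.mulVec, Fin.sum_univ_three, e22] using h2
  have hαne : a22 ≠ 0 := hα.ne'
  -- The 3×3 quadratic form is positive
  have hA3 : ∀ x y t : ℝ, ¬(x = 0 ∧ y = 0) →
      (0:ℝ) < a00 * x^2 + 2*a01*x*y + a11 * y^2
        + 2*a02*x*t + 2*a12*y*t + a22 * t^2 := by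
    intro x y t h
    have hne : ![x, y, t] ≠ 0 := by
      intro h0; exact h ⟨congrFun h0 0, congrFun h0 1⟩
    have h2 := hA.dotProduct_mulVec_pos (x := ![x, y, t]) hne
    simp [dotProduct, Matrix.mulVec, Fin.sum_univ_three, h10, h20, h21,
      e00, e01, e02, e11, e12, e22] at h2
    linarith [h2]
  -- Positivity of P-form
  have hPq : ∀ x y : ℝ, ¬(x = 0 ∧ y = 0) →
      0 < p00 * x^2 + 2*p01*x*y + p11 * y^2 := by
    intro x y h
    have hne : ![x, y] ≠ 0 := by
      intro h0; exact h ⟨congrFun h0 0, congrFun h0 1⟩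
    have h2 := hP.dotProduct_mulVec_pos (x := ![x, y]) hne
    simp [dotProduct, Matrix.mulVec, Fin.sum_univ_two, hp10, f00, f01, f11] at h2
    linarith [h2]
  obtain ⟨cP, hcP, hcPle⟩ := quad_lower _ _ _ hPq
  -- Schur complement form for A is positive
  have hid : ∀ x y : ℝ,
      a22 * ((a00 - a02^2 / a22) * x^2
          + 2*(a01 - a02 * a12 / a22)*x*y + (a11 - a12^2 / a22)*y^2)
        = a22 * (a00 * x^2 + 2*a01*x*y + a11 * y^2) - (a02 * x + a12 * y)^2 := by
    intro x y; field_simp; ring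
  have hAq : ∀ x y : ℝ, ¬(x = 0 ∧ y = 0) →
      0 < (a00 - a02^2 / a22) * x^2
          + 2*(a01 - a02 * a12 / a22)*x*y + (a11 - a12^2 / a22)*y^2 := by
    intro x y h
    have h3 := hA3 x y (-(a02 * x + a12 * y)/a22) h
    have e : a22 * (a00 * x ^ 2 + 2 * a01 * x * y + a11 * y ^ 2)
        - (a02 * x + a12 * y) ^ 2
        = a22 * (a00 * x^2 + 2*a01*x*y + a11 * y^2
          + 2*a02*x*(-(a02 * x + a12 * y)/a22)
          + 2*a12*y*(-(a02 * x + a12 * y)/a22)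
          + a22 * (-(a02 * x + a12 * y)/a22)^2) := by
      field_simp; ring
    have h5 : 0 < a22 * ((a00 - a02^2 / a22) * x^2
        + 2*(a01 - a02 * a12 / a22)*x*y + (a11 - a12^2 / a22)*y^2) := by
      rw [hid x y, e]; exact mul_pos hα h3
    by_contra hcon
    push_neg at hcon
    linarith [h5, mul_nonneg hα.le (neg_nonneg.2 hcon)]
  obtain ⟨mA, hmA, hmAle⟩ := quad_lower _ _ _ hAq
  -- opaque constants
  obtain ⟨m1, hm1le, hm1le1, hm1⟩ : ∃ m1 : ℝ, m1 ≤ mA ∧ m1 ≤ 1 ∧ 0 < m1 :=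
    ⟨min mA 1, min_le_left _ _, min_le_right _ _, lt_min hmA one_pos⟩
  obtain ⟨csv, hcsvle, hcsvle1, hcsv⟩ : ∃ c : ℝ, c ≤ cP ∧ c ≤ 1 ∧ 0 < c :=
    ⟨min cP 1, min_le_left _ _, min_le_right _ _, lt_min hcP one_pos⟩
  obtain ⟨b00, b01, b11, hb00, hb01, hb11, hb00n, hb01n, hb11n⟩ :
      ∃ b00 b01 b11 : ℝ, a00 ≤ b00 ∧ a01 ≤ b01 ∧ a11 ≤ b11 ∧
        0 ≤ b00 ∧ -b01 ≤ a01 ∧ 0 ≤ b11 :=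
    ⟨|a00|, |a01|, |a11|, le_abs_self _, le_abs_self _, le_abs_self _,
      abs_nonneg _, neg_abs_le _, abs_nonneg _⟩
  have hb01n' : 0 ≤ b01 := by linarith
  set bsv : ℝ := 1 + b00 + 2*b01 + b11 with hbsdef
  have hbs : 0 < bsv := by rw [hbsdef]; linarith
  have hasq : (0:ℝ) < a22 * m1 := by positivity
  refine ⟨Real.sqrt (a22 * m1) / a22, bsv, csv, b * (csv/bsv) * (Real.sqrt (a22 * m1) / a22),
    div_pos (Real.sqrt_pos.2 hasq) hα, hbs, hcsv, ?_, fun ξ τ hτ => ?_⟩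
  · have : 0 < Real.sqrt (a22 * m1) / a22 := div_pos (Real.sqrt_pos.2 hasq) hα
    positivity
  obtain ⟨x, y, hx, hy⟩ : ∃ x y : ℝ, ξ 0 = x ∧ ξ 1 = y := ⟨_, _, rfl, rfl⟩
  rw [hx, hy]
  have hN : 0 < x^2 + y^2 + τ^2 := by positivity
  have qA : quadForm2of3 A ξ = a00 * x^2 + 2 * a01 * x * y + a11 * y^2 := by
    simp [quadForm2of3, Fin.sum_univ_two, h10, e00, e01, e11, hx, hy]; ring
  have qP : quadForm2 P ξ = p00 * x^2 + 2 * p01 * x * y + p11 * y^2 := by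
    simp [quadForm2, Fin.sum_univ_two, hp10, f00, f01, f11, hx, hy]; ring
  have pA : pairA A ξ = a02 * x + a12 * y := by
    simp [pairA, e02, e12, hx, hy]
  -- lower bound for the sqrt argument
  have t1 : a22 * (mA * (x^2 + y^2))
      ≤ a22 * (a00 * x ^ 2 + 2 * a01 * x * y + a11 * y ^ 2) - (a02 * x + a12 * y) ^ 2 :=
    (mul_le_mul_of_nonneg_left (hmAle x y) hα.le).trans_eq (hid x y)
  have t2 : a22 * m1 * (x^2 + y^2) ≤ a22 * (mA * (x^2 + y^2)) := by
    rw [mul_assoc]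
    exact mul_le_mul_of_nonneg_left
      (mul_le_mul_of_nonneg_right hm1le (by positivity)) hα.le
  have t3 : a22 * m1 * τ^2 ≤ a22 * τ^2 := by
    rw [mul_assoc]
    exact mul_le_mul_of_nonneg_left (mul_le_of_le_one_left (sq_nonneg τ) hm1le1) hα.le
  have harg : a22 * m1 * (x^2 + y^2 + τ^2)
      ≤ a22 * (τ ^ 2 + quadForm2of3 A ξ) - pairA A ξ ^ 2 := by
    rw [qA, pA]
    linarith [t2.trans t1, t3]
  -- a₀ ≥ 0, denominator positive
  have ha0 : 0 ≤ quadForm2of3 A ξ := by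
    rw [qA]
    have h6 : 0 ≤ a22 * (a00 * x ^ 2 + 2 * a01 * x * y + a11 * y ^ 2) := by
      linarith [t1, sq_nonneg (a02 * x + a12 * y),
        mul_nonneg hα.le (mul_nonneg hmA.le (by positivity : (0:ℝ) ≤ x^2 + y^2))]
    by_contra hcon
    push_neg at hcon
    linarith [h6, mul_pos hα (neg_pos.2 hcon)]
  have hden : 0 < τ ^ 2 + quadForm2of3 A ξ := by positivity
  -- real part of λ̃
  have hReLam : (lamTilde A ξ τ).re
      = Real.sqrt (a22 * (τ ^ 2 + quadForm2of3 A ξ) - pairA A ξ ^ 2) / a22 := by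
    simp [lamTilde, Complex.div_re, Complex.normSq, div_eq_mul_inv, e22]
    field_simp
  have hsq : Real.sqrt (a22 * m1) * Real.sqrt (x^2 + y^2 + τ^2)
      ≤ Real.sqrt (a22 * (τ ^ 2 + quadForm2of3 A ξ) - pairA A ξ ^ 2) := by
    rw [← Real.sqrt_mul hasq.le]
    exact Real.sqrt_le_sqrt harg
  have hlam : Real.sqrt (a22 * m1) / a22 * Real.sqrt (x^2 + y^2 + τ^2)
      ≤ (lamTilde A ξ τ).re := by
    rw [hReLam, div_mul_eq_mul_div]
    gcongr
  -- upper bound for τ² + a₀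
  have hupper : τ ^ 2 + quadForm2of3 A ξ ≤ bsv * (x^2 + y^2 + τ^2) := by
    rw [qA, hbsdef]
    linarith [sq_nonneg x, sq_nonneg y,
      mul_nonneg hb00n (sq_nonneg x), mul_nonneg hb00n (sq_nonneg y),
      mul_nonneg hb00n (sq_nonneg τ), mul_nonneg hb11n (sq_nonneg x),
      mul_nonneg hb11n (sq_nonneg y), mul_nonneg hb11n (sq_nonneg τ),
      mul_nonneg hb01n' (sq_nonneg τ), mul_nonneg hb01n' (sq_nonneg x),
      mul_nonneg hb01n' (sq_nonneg y),
      mul_le_mul_of_nonneg_right hb00 (sq_nonneg x),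
      mul_le_mul_of_nonneg_right hb11 (sq_nonneg y),
      mul_nonneg (sub_nonneg.2 hb01) (sq_nonneg (x+y)),
      mul_nonneg (by linarith : (0:ℝ) ≤ b01 + a01) (sq_nonneg (x-y))]
  -- lower bound for τ² + p₀
  have hlower : csv * (x^2 + y^2 + τ^2) ≤ τ ^ 2 + quadForm2 P ξ := by
    rw [qP]
    linarith [hcPle x y,
      mul_le_mul_of_nonneg_right hcsvle (by positivity : (0:ℝ) ≤ x^2 + y^2),
      mul_le_of_le_one_left (sq_nonneg τ) hcsvle1]
  refine ⟨hlam, hupper, hlower, ?_⟩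
  -- the estimate for g̃
  have hnum : 0 < τ ^ 2 + quadForm2 P ξ := lt_of_lt_of_le (by positivity) hlower
  have hr : csv / bsv ≤ (τ ^ 2 + quadForm2 P ξ) / (τ ^ 2 + quadForm2of3 A ξ) := by
    rw [div_le_div_iff₀ hbs hden]
    linarith [mul_le_mul_of_nonneg_left hupper hcsv.le,
      mul_le_mul_of_nonneg_left hlower hbs.le]
  have hRe : (gTilde A P b ξ τ).re
      = b * ((τ ^ 2 + quadForm2 P ξ) / (τ ^ 2 + quadForm2of3 A ξ)) * (lamTilde A ξ τ).re := by
    have hRe' : ∀ (z : ℂ) (c u v : ℝ), (((c:ℝ):ℂ) * z * (((u/v : ℝ)):ℂ)).re = c * (u/v) * z.re := by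
      intros; simp [Complex.mul_re]; ring
    exact hRe' (lamTilde A ξ τ) b (τ ^ 2 + quadForm2 P ξ) (τ ^ 2 + quadForm2of3 A ξ)
  have h0 : 0 ≤ Real.sqrt (a22 * m1) / a22 * Real.sqrt (x^2 + y^2 + τ^2) := by positivity
  have s1 : (csv/bsv) * (Real.sqrt (a22 * m1) / a22 * Real.sqrt (x^2 + y^2 + τ^2))
      ≤ ((τ ^ 2 + quadForm2 P ξ) / (τ ^ 2 + quadForm2of3 A ξ))
        * (Real.sqrt (a22 * m1) / a22 * Real.sqrt (x^2 + y^2 + τ^2)) :=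
    mul_le_mul_of_nonneg_right hr h0
  have s2 : ((τ ^ 2 + quadForm2 P ξ) / (τ ^ 2 + quadForm2of3 A ξ))
        * (Real.sqrt (a22 * m1) / a22 * Real.sqrt (x^2 + y^2 + τ^2))
      ≤ ((τ ^ 2 + quadForm2 P ξ) / (τ ^ 2 + quadForm2of3 A ξ)) * (lamTilde A ξ τ).re :=
    mul_le_mul_of_nonneg_left hlam (le_of_lt (div_pos hnum hden))
  have s3 := mul_le_mul_of_nonneg_left (s1.trans s2) hb.le
  rw [ge_iff_le, hRe]
  calc b * (csv/bsv) * (Real.sqrt (a22 * m1) / a22) * Real.sqrt (x^2 + y^2 + τ^2)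
      = b * ((csv/bsv) * (Real.sqrt (a22 * m1) / a22 * Real.sqrt (x^2 + y^2 + τ^2))) := by
        ring
    _ ≤ b * (((τ ^ 2 + quadForm2 P ξ) / (τ ^ 2 + quadForm2of3 A ξ)) * (lamTilde A ξ τ).re) := s3
    _ = b * ((τ ^ 2 + quadForm2 P ξ) / (τ ^ 2 + quadForm2of3 A ξ)) * (lamTilde A ξ τ).re := by
        ring
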